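/- Let V have basis {x,y} over k and let I be the ideal of T(V) generated by P' = {xy - x, yx - y, x² - x, y² - y}. Then ⟨xy - x, yx - y⟩ = I, and gr(T(V)/I) is isomorphic as a graded algebra to T(V)/⟨xy, yx, x², y²⟩; i.e., T(V)/I is of PBW type with respect to P'. -/

import Mathlib

set_option linter.unnecessarySimpa false
set_option maxHeartbeats 1000000


/-- The leading homogeneous part of an element of a graded algebra. -/
noncomputable def LH {k T : Type*} [CommSemiring k] [Ring T] [Algebra k T]
    (𝒜 : ℕ → Submodule k T) [GradedAlgebra 𝒜] (f : T) : T :=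
  GradedAlgebra.proj 𝒜 (sSup {i | GradedAlgebra.proj 𝒜 i f ≠ 0}) f

/-- The two-sided ideal generated by a subset, as a `k`-submodule. -/
def twoSidedSpan (k : Type*) {T : Type*} [CommSemiring k] [Ring T] [Algebra k T]
    (P : Set T) : Submodule k T :=
  Submodule.span k {x | ∃ a b : T, ∃ p ∈ P, x = a * p * b}

section helpers
variable {k T : Type*} [CommSemiring k] [Ring T] [Algebra k T]

lemma mem_tss {P : Set T} {p : T} (hp : p ∈ P) (a c : T) :
    a * p * c ∈ twoSidedSpan k P :=
  Submodule.subset_span ⟨a, c, p, hp, rfl⟩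

lemma mem_tss' {P : Set T} {p : T} (hp : p ∈ P) : p ∈ twoSidedSpan k P := by
  simpa using mem_tss hp 1 1

lemma tss_le {P : Set T} {N : Submodule k T}
    (h : ∀ p ∈ P, ∀ a c : T, a * p * c ∈ N) : twoSidedSpan k P ≤ N :=
  Submodule.span_le.2 (by rintro _ ⟨a, c, p, hp, rfl⟩; exact h p hp a c)

lemma tss_mul_mem {P : Set T} {m : T} (hm : m ∈ twoSidedSpan k P) (a c : T) :
    a * m * c ∈ twoSidedSpan k P := by
  induction hm using Submodule.span_induction with
  | mem z hz =>
      obtain ⟨a', c', p, hp, rfl⟩ := hz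
      have : a * (a' * p * c') * c = (a * a') * p * (c' * c) := by noncomm_ring
      rw [this]; exact mem_tss hp _ _
  | zero => simpa using Submodule.zero_mem _
  | add z w _ _ hz hw =>
      have : a * (z + w) * c = a * z * c + a * w * c := by noncomm_ring
      rw [this]; exact Submodule.add_mem _ hz hw
  | smul r z _ hz =>
      have : a * (r • z) * c = r • (a * z * c) := by
        rw [mul_smul_comm, smul_mul_assoc]
      rw [this]; exact Submodule.smul_mem _ _ hz

end helpers

section rep
variable {k V : Type*} [Field k] [AddCommGroup V] [Module k V]

/-- First idempotent matrix. -/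
def Xm : Matrix (Fin 2) (Fin 2) k := !![1, 0; 0, 0]
/-- Second idempotent matrix. -/
def Ym : Matrix (Fin 2) (Fin 2) k := !![1, 0; 1, 0]

lemma XmXm : (Xm : Matrix (Fin 2) (Fin 2) k) * Xm = Xm := by
  ext i j; fin_cases i <;> fin_cases j <;>
    simp [Matrix.mul_apply, Fin.sum_univ_two, Xm]

lemma XmYm : (Xm : Matrix (Fin 2) (Fin 2) k) * Ym = Xm := by
  ext i j; fin_cases i <;> fin_cases j <;>
    simp [Matrix.mul_apply, Fin.sum_univ_two, Xm, Ym]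

lemma YmXm : (Ym : Matrix (Fin 2) (Fin 2) k) * Xm = Ym := by
  ext i j; fin_cases i <;> fin_cases j <;>
    simp [Matrix.mul_apply, Fin.sum_univ_two, Xm, Ym]

lemma YmYm : (Ym : Matrix (Fin 2) (Fin 2) k) * Ym = Ym := by
  ext i j; fin_cases i <;> fin_cases j <;>
    simp [Matrix.mul_apply, Fin.sum_univ_two, Xm, Ym]

lemma Xm_ne : (Xm : Matrix (Fin 2) (Fin 2) k) ≠ 0 := by
  intro h
  have := congrFun (congrFun h 0) 0
  simp [Xm] at this

lemma Ym_ne : (Ym : Matrix (Fin 2) (Fin 2) k) ≠ 0 := by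
  intro h
  have := congrFun (congrFun h 0) 0
  simp [Ym] at this

/-- The representation of `T(V)` on `k²` given by `x ↦ Xm`, `y ↦ Ym`. -/
noncomputable def phi (b : Module.Basis (Fin 2) k V) :
    TensorAlgebra k V →ₐ[k] Matrix (Fin 2) (Fin 2) k :=
  TensorAlgebra.lift k (b.constr k ![Xm, Ym])

variable (b : Module.Basis (Fin 2) k V)

lemma phi_x : phi b (TensorAlgebra.ι k (b 0)) = Xm := by
  rw [phi, TensorAlgebra.lift_ι_apply, Module.Basis.constr_basis]; rfl

lemma phi_y : phi b (TensorAlgebra.ι k (b 1)) = Ym := by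
  rw [phi, TensorAlgebra.lift_ι_apply, Module.Basis.constr_basis]; rfl

lemma phi_iv (v : V) :
    phi b (TensorAlgebra.ι k v) = b.repr v 0 • Xm + b.repr v 1 • Ym := by
  rw [phi, TensorAlgebra.lift_ι_apply, Module.Basis.constr_apply_fintype,
    Fin.sum_univ_two]
  rfl

lemma low_degree_zero {c : k} {v : V}
    (h : phi b (algebraMap k (TensorAlgebra k V) c + TensorAlgebra.ι k v) = 0) :
    c = 0 ∧ v = 0 := by
  rw [map_add, AlgHom.commutes, phi_iv] at h
  have h10 := congrFun (congrFun h 1) 0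
  have h11 := congrFun (congrFun h 1) 1
  have h00 := congrFun (congrFun h 0) 0
  simp [Xm, Ym, Matrix.algebraMap_matrix_apply] at h10 h11 h00
  have hv1 : b.repr v 1 = 0 := h10
  have hc : c = 0 := h11
  have hv0 : b.repr v 0 = 0 := by
    rw [hv1, hc] at h00; simpa using h00
  refine ⟨hc, ?_⟩
  have : b.repr v = 0 := by
    ext i; fin_cases i <;> simpa [hv0] using hv1
  simpa using congrArg b.repr.symm this

end rep

section graded
variable {k V : Type*} [Field k] [AddCommGroup V] [Module k V] (b : Module.Basis (Fin 2) k V)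

local notation "𝒜" =>
  (fun n => LinearMap.range (TensorAlgebra.ι k : V →ₗ[k] TensorAlgebra k V) ^ n)

lemma LH_sub {u w : TensorAlgebra k V} (hu : u ∈ 𝒜 2) (hw : w ∈ 𝒜 1)
    (hu0 : u ≠ 0) : LH 𝒜 (u - w) = u := by
  classical
  letI : GradedAlgebra 𝒜 := TensorAlgebra.gradedAlgebra
  have hp2 : GradedAlgebra.proj 𝒜 2 (u - w) = u := by
    rw [map_sub, GradedAlgebra.proj_apply, GradedAlgebra.proj_apply,
      DirectSum.decompose_of_mem_same 𝒜 hu,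
      DirectSum.decompose_of_mem_ne 𝒜 hw (by norm_num), sub_zero]
  have hpi : ∀ i, i ≠ 1 → i ≠ 2 → GradedAlgebra.proj 𝒜 i (u - w) = 0 := by
    intro i h1 h2
    rw [map_sub, GradedAlgebra.proj_apply, GradedAlgebra.proj_apply,
      DirectSum.decompose_of_mem_ne 𝒜 hu (fun h => h2 h.symm),
      DirectSum.decompose_of_mem_ne 𝒜 hw (fun h => h1 h.symm), sub_zero]
  have hS : {i | GradedAlgebra.proj 𝒜 i (u - w) ≠ 0} ⊆ {1, 2} := by
    intro i hi
    by_contra hmem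
    simp only [Set.mem_insert_iff, Set.mem_singleton_iff, not_or] at hmem
    exact hi (hpi i hmem.1 hmem.2)
  have h2S : (2 : ℕ) ∈ {i | GradedAlgebra.proj 𝒜 i (u - w) ≠ 0} := by
    rw [Set.mem_setOf_eq, hp2]; exact hu0
  have hb : BddAbove {i | GradedAlgebra.proj 𝒜 i (u - w) ≠ 0} :=
    BddAbove.mono hS (((Set.finite_singleton 2).insert 1).bddAbove)
  have hsup : sSup {i | GradedAlgebra.proj 𝒜 i (u - w) ≠ 0} = 2 := by
    refine le_antisymm (csSup_le ⟨2, h2S⟩ fun i hi => ?_) (le_csSup hb h2S)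
    have := hS hi
    simp only [Set.mem_insert_iff, Set.mem_singleton_iff] at this
    omega
  rw [LH, hsup, hp2]

lemma range_le_span :
    (LinearMap.range (TensorAlgebra.ι k : V →ₗ[k] TensorAlgebra k V) : Submodule k _) ≤
      Submodule.span k {TensorAlgebra.ι k (b 0), TensorAlgebra.ι k (b 1)} := by
  rintro _ ⟨v, rfl⟩
  have hv : TensorAlgebra.ι k v
      = b.repr v 0 • TensorAlgebra.ι k (b 0) + b.repr v 1 • TensorAlgebra.ι k (b 1) := by
    conv_lhs => rw [← b.sum_repr v]
    rw [Fin.sum_univ_two, map_add, map_smul, map_smul]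
  rw [hv]
  exact Submodule.add_mem _
    (Submodule.smul_mem _ _ (Submodule.subset_span (Set.mem_insert _ _)))
    (Submodule.smul_mem _ _ (Submodule.subset_span (Set.mem_insert_of_mem _ rfl)))

lemma A2_le_J :
    (𝒜 2 : Submodule k (TensorAlgebra k V)) ≤
      twoSidedSpan k {TensorAlgebra.ι k (b 0) * TensorAlgebra.ι k (b 1),
        TensorAlgebra.ι k (b 1) * TensorAlgebra.ι k (b 0),
        TensorAlgebra.ι k (b 0) * TensorAlgebra.ι k (b 0),
        TensorAlgebra.ι k (b 1) * TensorAlgebra.ι k (b 1)} := by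
  set x := TensorAlgebra.ι k (b 0)
  set y := TensorAlgebra.ι k (b 1)
  have h1 : (𝒜 2 : Submodule k (TensorAlgebra k V)) ≤
      Submodule.span k {x, y} * Submodule.span k {x, y} := by
    rw [show (𝒜 2 : Submodule k (TensorAlgebra k V))
      = LinearMap.range (TensorAlgebra.ι k : V →ₗ[k] TensorAlgebra k V) *
        LinearMap.range (TensorAlgebra.ι k : V →ₗ[k] TensorAlgebra k V) from pow_two _]
    exact mul_le_mul' (range_le_span b) (range_le_span b)
  refine h1.trans ?_
  rw [Submodule.span_mul_span]
  refine Submodule.span_le.2 ?_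
  rintro z hz
  rw [Set.mem_mul] at hz
  obtain ⟨a, ha, c, hc, rfl⟩ := hz
  have : a * c ∈ ({x * y, y * x, x * x, y * y} : Set (TensorAlgebra k V)) := by
    rcases ha with rfl | ha <;> rcases hc with rfl | hc
    · simp
    · rw [Set.mem_singleton_iff] at hc; subst hc; simp
    · rw [Set.mem_singleton_iff] at ha; subst ha; simp
    · rw [Set.mem_singleton_iff] at ha; rw [Set.mem_singleton_iff] at hc
      subst ha; subst hc; simp
  exact mem_tss' this

lemma An_le_J (n : ℕ) :
    (𝒜 (n + 2) : Submodule k (TensorAlgebra k V)) ≤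
      twoSidedSpan k {TensorAlgebra.ι k (b 0) * TensorAlgebra.ι k (b 1),
        TensorAlgebra.ι k (b 1) * TensorAlgebra.ι k (b 0),
        TensorAlgebra.ι k (b 0) * TensorAlgebra.ι k (b 0),
        TensorAlgebra.ι k (b 1) * TensorAlgebra.ι k (b 1)} := by
  intro z hz
  have hz' : z ∈ (𝒜 n : Submodule k (TensorAlgebra k V)) * 𝒜 2 := by
    rwa [← pow_add]
  refine Submodule.mul_induction_on hz' (fun a _ m hm => ?_) (fun _ _ h1 h2 => Submodule.add_mem _ h1 h2)
  have : a * m = a * m * 1 := (mul_one _).symm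
  rw [this]
  exact tss_mul_mem (A2_le_J b hm) a 1

lemma phi_ker : ∀ f ∈ twoSidedSpan k
    {TensorAlgebra.ι k (b 0) * TensorAlgebra.ι k (b 1) - TensorAlgebra.ι k (b 0),
     TensorAlgebra.ι k (b 1) * TensorAlgebra.ι k (b 0) - TensorAlgebra.ι k (b 1),
     TensorAlgebra.ι k (b 0) * TensorAlgebra.ι k (b 0) - TensorAlgebra.ι k (b 0),
     TensorAlgebra.ι k (b 1) * TensorAlgebra.ι k (b 1) - TensorAlgebra.ι k (b 1)},
    phi b f = 0 := by
  intro f hf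
  have h := tss_le (k := k) (N := LinearMap.ker (phi b).toLinearMap) ?_ hf
  · exact h
  · intro p hp a c
    have hp0 : phi b p = 0 := by
      simp only [Set.mem_insert_iff, Set.mem_singleton_iff] at hp
      rcases hp with rfl | rfl | rfl | rfl <;>
        simp [phi_x, phi_y, XmXm, XmYm, YmXm, YmYm]
    simp only [LinearMap.mem_ker, AlgHom.toLinearMap_apply, map_mul, hp0, mul_zero, zero_mul]

lemma LH_I_mem {f : TensorAlgebra k V}
    (hf : f ∈ twoSidedSpan k
      {TensorAlgebra.ι k (b 0) * TensorAlgebra.ι k (b 1) - TensorAlgebra.ι k (b 0),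
       TensorAlgebra.ι k (b 1) * TensorAlgebra.ι k (b 0) - TensorAlgebra.ι k (b 1),
       TensorAlgebra.ι k (b 0) * TensorAlgebra.ι k (b 0) - TensorAlgebra.ι k (b 0),
       TensorAlgebra.ι k (b 1) * TensorAlgebra.ι k (b 1) - TensorAlgebra.ι k (b 1)}) :
    LH 𝒜 f ∈ twoSidedSpan k
      {TensorAlgebra.ι k (b 0) * TensorAlgebra.ι k (b 1),
       TensorAlgebra.ι k (b 1) * TensorAlgebra.ι k (b 0),
       TensorAlgebra.ι k (b 0) * TensorAlgebra.ι k (b 0),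
       TensorAlgebra.ι k (b 1) * TensorAlgebra.ι k (b 1)} := by
  classical
  letI : GradedAlgebra 𝒜 := TensorAlgebra.gradedAlgebra
  by_cases hf0 : f = 0
  · have hLH0 : LH 𝒜 (0 : TensorAlgebra k V) = 0 := by
      rw [LH]; exact map_zero _
    rw [hf0, hLH0]
    exact Submodule.zero_mem _
  set S := {i | GradedAlgebra.proj 𝒜 i f ≠ 0} with hSdef
  have hSsupp : ∀ i, i ∈ S ↔ i ∈ (DirectSum.decompose 𝒜 f).support := fun i =>
    (GradedAlgebra.mem_support_iff 𝒜 f i).symm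
  have hne : S.Nonempty := by
    rcases Set.eq_empty_or_nonempty S with h | h
    · exfalso
      apply hf0
      have hall : ∀ i, GradedAlgebra.proj 𝒜 i f = 0 := by
        intro i
        by_contra hi
        exact Set.eq_empty_iff_forall_notMem.mp h i hi
      calc f = ∑ i ∈ (DirectSum.decompose 𝒜 f).support,
              ((DirectSum.decompose 𝒜 f i : 𝒜 i) : TensorAlgebra k V) :=
            (DirectSum.sum_support_decompose 𝒜 f).symm
        _ = 0 := Finset.sum_eq_zero fun i _ => by
              rw [← GradedAlgebra.proj_apply]; exact hall i
    · exact h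
  have hbdd : BddAbove S := by
    refine Set.Finite.bddAbove (Set.Finite.subset (Finset.finite_toSet
      (DirectSum.decompose 𝒜 f).support) ?_)
    intro i hi
    exact (hSsupp i).mp hi
  have hd : sSup S ∈ S := Nat.sSup_mem hne hbdd
  by_cases hd2 : 2 ≤ sSup S
  · obtain ⟨m, hm⟩ : ∃ m, sSup S = m + 2 := ⟨sSup S - 2, by omega⟩
    refine An_le_J b m ?_
    rw [← hm]
    rw [LH, GradedAlgebra.proj_apply]
    exact SetLike.coe_mem _
  · exfalso
    push_neg at hd2
    have hsupp01 : (DirectSum.decompose 𝒜 f).support ⊆ ({0, 1} : Finset ℕ) := by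
      intro i hi
      have hiS : i ∈ S := (hSsupp i).mpr hi
      have : i ≤ sSup S := le_csSup hbdd hiS
      simp only [Finset.mem_insert, Finset.mem_singleton]
      omega
    have hf01 : f = ((DirectSum.decompose 𝒜 f 0 : 𝒜 0) : TensorAlgebra k V)
        + ((DirectSum.decompose 𝒜 f 1 : 𝒜 1) : TensorAlgebra k V) := by
      have := (DirectSum.sum_support_decompose 𝒜 f).symm
      rw [Finset.sum_subset hsupp01 (fun i _ hnot => by
        rw [← GradedAlgebra.proj_apply]
        by_contra hne'
        exact hnot ((hSsupp i).mp hne'))] at this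
      simpa [Finset.sum_insert, Finset.mem_singleton] using this
    have h0 : ((DirectSum.decompose 𝒜 f 0 : 𝒜 0) : TensorAlgebra k V)
        ∈ (1 : Submodule k (TensorAlgebra k V)) := by
      have hle : (LinearMap.range (TensorAlgebra.ι k : V →ₗ[k] TensorAlgebra k V)) ^ 0
          ≤ (1 : Submodule k (TensorAlgebra k V)) := le_of_eq (pow_zero _)
      exact hle (SetLike.coe_mem (DirectSum.decompose 𝒜 f 0))
    have h1 : ((DirectSum.decompose 𝒜 f 1 : 𝒜 1) : TensorAlgebra k V)
        ∈ LinearMap.range (TensorAlgebra.ι k : V →ₗ[k] TensorAlgebra k V) := by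
      have hle : (LinearMap.range (TensorAlgebra.ι k : V →ₗ[k] TensorAlgebra k V)) ^ 1
          ≤ LinearMap.range (TensorAlgebra.ι k : V →ₗ[k] TensorAlgebra k V) :=
        le_of_eq (pow_one _)
      exact hle (SetLike.coe_mem (DirectSum.decompose 𝒜 f 1))
    obtain ⟨c, hc⟩ := Submodule.mem_one.mp h0
    obtain ⟨v, hv⟩ := h1
    have hfcv : f = algebraMap k (TensorAlgebra k V) c + TensorAlgebra.ι k v := by
      rw [hf01, hc, hv]
    have hphi : phi b (algebraMap k (TensorAlgebra k V) c + TensorAlgebra.ι k v) = 0 := by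
      rw [← hfcv]; exact phi_ker b f hf
    obtain ⟨hc0, hv0⟩ := low_degree_zero b hphi
    apply hf0
    rw [hfcv, hc0, hv0, map_zero, map_zero, add_zero]

end graded

/-- for `P' = {xy - x, yx - y, x² - x, y² - y}` in `T(V)`,
`V = span{x,y}`: the ideal generated by `{xy - x, yx - y}` equals
`I = ⟨P'⟩`, and `T(V)/I` is of PBW type with respect to `P'`, i.e.
`⟨π(P')⟩ = ⟨xy, yx, x², y²⟩` equals `⟨LH(I)⟩`, so that
`gr(T(V)/I) ≅ T(V)/⟨xy, yx, x², y²⟩` as graded algebras. -/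
theorem stmt6 {k V : Type*} [Field k] [AddCommGroup V] [Module k V]
    (b : Module.Basis (Fin 2) k V) :
    letI 𝒜 : ℕ → Submodule k (TensorAlgebra k V) :=
      fun n => LinearMap.range (TensorAlgebra.ι k : V →ₗ[k] TensorAlgebra k V) ^ n
    letI x : TensorAlgebra k V := TensorAlgebra.ι k (b 0)
    letI y : TensorAlgebra k V := TensorAlgebra.ι k (b 1)
    letI I := twoSidedSpan k {x * y - x, y * x - y, x * x - x, y * y - y}
    twoSidedSpan k {x * y - x, y * x - y} = I ∧
      twoSidedSpan k {x * y, y * x, x * x, y * y} =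
        twoSidedSpan k (LH 𝒜 '' (I : Set (TensorAlgebra k V))) := by
    classical
  set x : TensorAlgebra k V := TensorAlgebra.ι k (b 0) with hxdef
  set y : TensorAlgebra k V := TensorAlgebra.ι k (b 1) with hydef
  refine ⟨?_, ?_⟩
  · -- Part 1
    apply le_antisymm
    · refine tss_le ?_
      intro p hp a c
      refine mem_tss ?_ a c
      simp only [Set.mem_insert_iff, Set.mem_singleton_iff] at hp ⊢
      tauto
    · refine tss_le ?_
      intro p hp a c
      simp only [Set.mem_insert_iff, Set.mem_singleton_iff] at hp
      rcases hp with rfl | rfl | rfl | rfl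
      · exact mem_tss (Set.mem_insert _ _) a c
      · refine mem_tss ?_ a c
        simp only [Set.mem_insert_iff, Set.mem_singleton_iff]; tauto
      · refine tss_mul_mem ?_ a c
        have key : x * x - x
            = 1 * (x * y - x) * 1 - 1 * (x * y - x) * x + x * (y * x - y) * 1 := by
          noncomm_ring
        rw [key]
        refine Submodule.add_mem _ (Submodule.sub_mem _ ?_ ?_) ?_
        · exact mem_tss (Set.mem_insert _ _) 1 1
        · exact mem_tss (Set.mem_insert _ _) 1 x
        · refine mem_tss ?_ x 1
          simp only [Set.mem_insert_iff, Set.mem_singleton_iff]; tauto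
      · refine tss_mul_mem ?_ a c
        have key : y * y - y
            = 1 * (y * x - y) * 1 - 1 * (y * x - y) * y + y * (x * y - x) * 1 := by
          noncomm_ring
        rw [key]
        refine Submodule.add_mem _ (Submodule.sub_mem _ ?_ ?_) ?_
        · refine mem_tss ?_ 1 1
          simp only [Set.mem_insert_iff, Set.mem_singleton_iff]; tauto
        · refine mem_tss ?_ 1 y
          simp only [Set.mem_insert_iff, Set.mem_singleton_iff]; tauto
        · exact mem_tss (Set.mem_insert _ _) y 1
  · -- Part 2
    have hx1 : x ∈ (LinearMap.range (TensorAlgebra.ι k : V →ₗ[k] TensorAlgebra k V)) ^ 1 := by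
      rw [pow_one]; exact ⟨b 0, rfl⟩
    have hy1 : y ∈ (LinearMap.range (TensorAlgebra.ι k : V →ₗ[k] TensorAlgebra k V)) ^ 1 := by
      rw [pow_one]; exact ⟨b 1, rfl⟩
    have hxy2 : x * y ∈ (LinearMap.range (TensorAlgebra.ι k : V →ₗ[k] TensorAlgebra k V)) ^ 2 := by
      rw [pow_two]; exact Submodule.mul_mem_mul ⟨b 0, rfl⟩ ⟨b 1, rfl⟩
    have hyx2 : y * x ∈ (LinearMap.range (TensorAlgebra.ι k : V →ₗ[k] TensorAlgebra k V)) ^ 2 := by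
      rw [pow_two]; exact Submodule.mul_mem_mul ⟨b 1, rfl⟩ ⟨b 0, rfl⟩
    have hxx2 : x * x ∈ (LinearMap.range (TensorAlgebra.ι k : V →ₗ[k] TensorAlgebra k V)) ^ 2 := by
      rw [pow_two]; exact Submodule.mul_mem_mul ⟨b 0, rfl⟩ ⟨b 0, rfl⟩
    have hyy2 : y * y ∈ (LinearMap.range (TensorAlgebra.ι k : V →ₗ[k] TensorAlgebra k V)) ^ 2 := by
      rw [pow_two]; exact Submodule.mul_mem_mul ⟨b 1, rfl⟩ ⟨b 1, rfl⟩
    have hphixy : phi b (x * y) = Xm := by rw [map_mul, phi_x, phi_y, XmYm]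
    have hphiyx : phi b (y * x) = Ym := by rw [map_mul, phi_x, phi_y, YmXm]
    have hphixx : phi b (x * x) = Xm := by rw [map_mul, phi_x, XmXm]
    have hphiyy : phi b (y * y) = Ym := by rw [map_mul, phi_y, YmYm]
    have hxyne : x * y ≠ 0 := fun h => Xm_ne (k := k) (by rw [← hphixy, h, map_zero])
    have hyxne : y * x ≠ 0 := fun h => Ym_ne (k := k) (by rw [← hphiyx, h, map_zero])
    have hxxne : x * x ≠ 0 := fun h => Xm_ne (k := k) (by rw [← hphixx, h, map_zero])
    have hyyne : y * y ≠ 0 := fun h => Ym_ne (k := k) (by rw [← hphiyy, h, map_zero])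
    have LHxy := LH_sub hxy2 hx1 hxyne
    have LHyx := LH_sub hyx2 hy1 hyxne
    have LHxx := LH_sub hxx2 hx1 hxxne
    have LHyy := LH_sub hyy2 hy1 hyyne
    have hxyI : x * y - x ∈ twoSidedSpan k
        ({x * y - x, y * x - y, x * x - x, y * y - y} : Set (TensorAlgebra k V)) :=
      mem_tss' (Set.mem_insert _ _)
    have hyxI : y * x - y ∈ twoSidedSpan k
        ({x * y - x, y * x - y, x * x - x, y * y - y} : Set (TensorAlgebra k V)) :=
      mem_tss' (by simp only [Set.mem_insert_iff, Set.mem_singleton_iff]; tauto)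
    have hxxI : x * x - x ∈ twoSidedSpan k
        ({x * y - x, y * x - y, x * x - x, y * y - y} : Set (TensorAlgebra k V)) :=
      mem_tss' (by simp only [Set.mem_insert_iff, Set.mem_singleton_iff]; tauto)
    have hyyI : y * y - y ∈ twoSidedSpan k
        ({x * y - x, y * x - y, x * x - x, y * y - y} : Set (TensorAlgebra k V)) :=
      mem_tss' (by simp only [Set.mem_insert_iff, Set.mem_singleton_iff]; tauto)
    apply le_antisymm
    · refine tss_le ?_
      intro p hp a c
      refine mem_tss ?_ a c
      simp only [Set.mem_insert_iff, Set.mem_singleton_iff] at hp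
      rcases hp with rfl | rfl | rfl | rfl
      · exact ⟨x * y - x, hxyI, LHxy⟩
      · exact ⟨y * x - y, hyxI, LHyx⟩
      · exact ⟨x * x - x, hxxI, LHxx⟩
      · exact ⟨y * y - y, hyyI, LHyy⟩
    · refine tss_le ?_
      rintro p ⟨f, hfI, rfl⟩ a c
      exact tss_mul_mem (LH_I_mem b hfI) a c
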